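/- Let T be a braided self-adjoint contraction on H ⊗ H, and let U_n = (T_1⋯T_n)(T_1⋯T_{n-1})⋯T_1 on H^{⊗(n+1)}. Then ker P_{n+1} is invariant under U_n. -/

import Mathlib

open scoped ComplexOrder

namespace Wick

/-- The operator `T_i = 1^{⊗(i-1)} ⊗ T ⊗ 1^{⊗(n-i-1)}` on `H^{⊗n}` (1-indexed, acting on
tensor factors `i` and `i+1`), where `H = ℂ^d` and `H^{⊗n}` is identified with
functions `(Fin n → Fin d) → ℂ` via the basis of elementary tensors. -/
noncomputable def Ti (d n : ℕ) (T : Matrix (Fin d × Fin d) (Fin d × Fin d) ℂ) (i : ℕ) :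
    Matrix (Fin n → Fin d) (Fin n → Fin d) ℂ :=
  if h : 1 ≤ i ∧ i < n then
    fun w w' =>
      T (w ⟨i - 1, by omega⟩, w ⟨i, h.2⟩) (w' ⟨i - 1, by omega⟩, w' ⟨i, h.2⟩) *
        ∏ j : Fin n, if (j : ℕ) = i - 1 ∨ (j : ℕ) = i then 1 else (if w j = w' j then 1 else 0)
  else 1

/-- The product `T_1 T_2 ⋯ T_k` on `H^{⊗n}`. -/
noncomputable def prodT (d n : ℕ) (T : Matrix (Fin d × Fin d) (Fin d × Fin d) ℂ) (k : ℕ) :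
    Matrix (Fin n → Fin d) (Fin n → Fin d) ℂ :=
  ((List.range k).map (fun j => Ti d n T (j + 1))).prod

/-- The reversed product `T_k T_{k-1} ⋯ T_1` on `H^{⊗n}`. -/
noncomputable def prodTrev (d n : ℕ) (T : Matrix (Fin d × Fin d) (Fin d × Fin d) ℂ) (k : ℕ) :
    Matrix (Fin n → Fin d) (Fin n → Fin d) ℂ :=
  ((List.range k).map (fun j => Ti d n T (k - j))).prod

/-- `R_n = 1 + T_1 + T_1 T_2 + ⋯ + T_1 T_2 ⋯ T_{n-1}` on `H^{⊗n}`. -/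
noncomputable def Rmat (d n : ℕ) (T : Matrix (Fin d × Fin d) (Fin d × Fin d) ℂ) :
    Matrix (Fin n → Fin d) (Fin n → Fin d) ℂ :=
  ∑ k ∈ Finset.range n, prodT d n T k

/-- `1 ⊗ A` on `H^{⊗(n+1)}`, for `A` an operator on `H^{⊗n}`. -/
noncomputable def oneTensor (d n : ℕ) (A : Matrix (Fin n → Fin d) (Fin n → Fin d) ℂ) :
    Matrix (Fin (n + 1) → Fin d) (Fin (n + 1) → Fin d) ℂ :=
  fun w w' => (if w 0 = w' 0 then 1 else 0) * A (fun j => w j.succ) (fun j => w' j.succ)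

/-- `A ⊗ 1` on `H^{⊗(n+1)}`, for `A` an operator on `H^{⊗n}`. -/
noncomputable def tensorOne (d n : ℕ) (A : Matrix (Fin n → Fin d) (Fin n → Fin d) ℂ) :
    Matrix (Fin (n + 1) → Fin d) (Fin (n + 1) → Fin d) ℂ :=
  fun w w' =>
    A (fun j => w j.castSucc) (fun j => w' j.castSucc) *
      (if w (Fin.last n) = w' (Fin.last n) then 1 else 0)

/-- The operators `P_n` on `H^{⊗n}`: `P_1 = 1`, `P_{n+1} = (1 ⊗ P_n) R_{n+1}`
(so `P_2 = R_2 = 1 + T`). -/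
noncomputable def Pmat (d : ℕ) (T : Matrix (Fin d × Fin d) (Fin d × Fin d) ℂ) :
    (n : ℕ) → Matrix (Fin n → Fin d) (Fin n → Fin d) ℂ
  | 0 => 1
  | n + 1 => oneTensor d n (Pmat d T n) * Rmat d (n + 1) T

/-- `U_n = (T_1 ⋯ T_n)(T_1 ⋯ T_{n-1}) ⋯ (T_1 T_2) T_1` on `H^{⊗m}`. -/
noncomputable def Umat (d m : ℕ) (T : Matrix (Fin d × Fin d) (Fin d × Fin d) ℂ) (n : ℕ) :
    Matrix (Fin m → Fin d) (Fin m → Fin d) ℂ :=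
  ((List.range n).map (fun j => prodT d m T (n - j))).prod

/-- The braid condition `T_1 T_2 T_1 = T_2 T_1 T_2` on `H^{⊗3}`. -/
def Braided (d : ℕ) (T : Matrix (Fin d × Fin d) (Fin d × Fin d) ℂ) : Prop :=
  Ti d 3 T 1 * Ti d 3 T 2 * Ti d 3 T 1 = Ti d 3 T 2 * Ti d 3 T 1 * Ti d 3 T 2

/-- Elementary tensor `X ⊗ Y ∈ H^{⊗(n+m)}`. -/
noncomputable def tensorVec {d n m : ℕ} (X : (Fin n → Fin d) → ℂ) (Y : (Fin m → Fin d) → ℂ) :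
    (Fin (n + m) → Fin d) → ℂ :=
  fun u => X (fun i => u (Fin.castAdd m i)) * Y (fun j => u (Fin.natAdd n j))



/-! ### Foundations: kron -/

section Kron

variable {d : ℕ}

/-- Kronecker-type product of operators on `H^{⊗p}` and `H^{⊗q}`, as an operator
on `H^{⊗(p+q)}`. -/
noncomputable def kron (p q : ℕ) (A : Matrix (Fin p → Fin d) (Fin p → Fin d) ℂ)
    (B : Matrix (Fin q → Fin d) (Fin q → Fin d) ℂ) :
    Matrix (Fin (p + q) → Fin d) (Fin (p + q) → Fin d) ℂ :=
  fun u u' =>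
    A (fun i => u (Fin.castAdd q i)) (fun i => u' (Fin.castAdd q i)) *
      B (fun j => u (Fin.natAdd p j)) (fun j => u' (Fin.natAdd p j))

/-- The equivalence between pairs of functions and functions on `Fin (p+q)`. -/
def appendEquiv (p q d : ℕ) : (Fin p → Fin d) × (Fin q → Fin d) ≃ (Fin (p + q) → Fin d) where
  toFun x := Fin.append x.1 x.2
  invFun u := (fun i => u (Fin.castAdd q i), fun j => u (Fin.natAdd p j))
  left_inv x := by
    ext i
    · simp [Fin.append_left]
    · simp [Fin.append_right]
  right_inv u := by
    funext i
    refine Fin.addCases (fun i => ?_) (fun i => ?_) i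
    · simp [Fin.append_left]
    · simp [Fin.append_right]

theorem kron_mul (p q : ℕ) (A A' : Matrix (Fin p → Fin d) (Fin p → Fin d) ℂ)
    (B B' : Matrix (Fin q → Fin d) (Fin q → Fin d) ℂ) :
    kron p q A B * kron p q A' B' = kron p q (A * A') (B * B') := by
  funext u u'
  rw [Matrix.mul_apply]
  have key : (∑ v : Fin (p + q) → Fin d, kron p q A B u v * kron p q A' B' v u')
      = ∑ x : (Fin p → Fin d) × (Fin q → Fin d),
        (A (fun i => u (Fin.castAdd q i)) x.1 * A' x.1 (fun i => u' (Fin.castAdd q i))) *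
          (B (fun j => u (Fin.natAdd p j)) x.2 * B' x.2 (fun j => u' (Fin.natAdd p j))) := by
    refine (Fintype.sum_equiv (appendEquiv p q d) _ _ ?_).symm
    intro x
    simp only [appendEquiv, Equiv.coe_fn_mk, kron, Fin.append_left, Fin.append_right]
    ring
  rw [key, Fintype.sum_prod_type]
  simp only []
  rw [← Finset.sum_mul_sum]
  rw [kron, ← Matrix.mul_apply, ← Matrix.mul_apply]

theorem kron_one_one (p q : ℕ) :
    kron p q (1 : Matrix (Fin p → Fin d) (Fin p → Fin d) ℂ) 1 = 1 := by
  funext u u'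
  simp only [kron, Matrix.one_apply]
  by_cases h : u = u'
  · subst h; simp
  · have hne : ¬((fun i => u (Fin.castAdd q i)) = (fun i => u' (Fin.castAdd q i)) ∧
        (fun j => u (Fin.natAdd p j)) = (fun j => u' (Fin.natAdd p j))) := by
      rintro ⟨h1, h2⟩
      apply h
      funext i
      refine Fin.addCases (fun i => ?_) (fun i => ?_) i
      · exact congrFun h1 i
      · exact congrFun h2 i
    rw [if_neg h]
    rcases not_and_or.mp hne with h' | h'
    · rw [if_neg h', zero_mul]
    · rw [if_neg h', mul_zero]

theorem kron_add_right (p q : ℕ) (A : Matrix (Fin p → Fin d) (Fin p → Fin d) ℂ)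
    (B B' : Matrix (Fin q → Fin d) (Fin q → Fin d) ℂ) :
    kron p q A (B + B') = kron p q A B + kron p q A B' := by
  funext u u'; simp [kron, mul_add]

theorem kron_zero_right (p q : ℕ) (A : Matrix (Fin p → Fin d) (Fin p → Fin d) ℂ) :
    kron p q A (0 : Matrix (Fin q → Fin d) (Fin q → Fin d) ℂ) = 0 := by
  funext u u'; simp [kron]

theorem kron_add_left (p q : ℕ) (A A' : Matrix (Fin p → Fin d) (Fin p → Fin d) ℂ)
    (B : Matrix (Fin q → Fin d) (Fin q → Fin d) ℂ) :
    kron p q (A + A') B = kron p q A B + kron p q A' B := by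
  funext u u'; simp [kron, add_mul]

theorem kron_zero_left (p q : ℕ) (B : Matrix (Fin q → Fin d) (Fin q → Fin d) ℂ) :
    kron p q (0 : Matrix (Fin p → Fin d) (Fin p → Fin d) ℂ) B = 0 := by
  funext u u'; simp [kron]

end Kron

/-! ### Ti basics and embeddings -/

section TiEmbed

variable {d : ℕ} (T : Matrix (Fin d × Fin d) (Fin d × Fin d) ℂ)

theorem Ti_of_not (m i : ℕ) (h : ¬(1 ≤ i ∧ i < m)) : Ti d m T i = 1 := by
  exact dif_neg h

theorem deltaProd {q : ℕ} (a b : Fin q → Fin d) :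
    (∏ j : Fin q, if a j = b j then (1 : ℂ) else 0) = if a = b then 1 else 0 := by
  by_cases h : a = b
  · subst h; simp
  · rw [if_neg h]
    obtain ⟨j, hj⟩ := Function.ne_iff.mp h
    exact Finset.prod_eq_zero (Finset.mem_univ j) (if_neg hj)

/-- A `Ti` with letter inside the left block of a `kron` splitting. -/
theorem Ti_kron_left (p q i : ℕ) (h1 : 1 ≤ i) (h2 : i < p) :
    Ti d (p + q) T i = kron p q (Ti d p T i) 1 := by
  funext u u'
  have eA : Ti d (p + q) T i = _ := dif_pos (⟨h1, by omega⟩ : 1 ≤ i ∧ i < p + q)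
  have eB : Ti d p T i = _ := dif_pos (⟨h1, h2⟩ : 1 ≤ i ∧ i < p)
  rw [eA, eB]
  simp only [kron]
  rw [Fin.prod_univ_add]
  have e1 : ∀ (w : Fin (p + q) → Fin d) (h : i - 1 < p + q) (h' : i - 1 < p),
      w ⟨i - 1, h⟩ = w (Fin.castAdd q ⟨i - 1, h'⟩) := by
    intro w h h'; congr 1
  have e2 : ∀ (w : Fin (p + q) → Fin d) (h : i < p + q) (h' : i < p),
      w ⟨i, h⟩ = w (Fin.castAdd q ⟨i, h'⟩) := by
    intro w h h'; congr 1
  rw [e1 u _ (by omega), e2 u _ h2, e1 u' _ (by omega), e2 u' _ h2]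
  have hleft : ∀ j : Fin p,
      (if ((Fin.castAdd q j : Fin (p + q)) : ℕ) = i - 1 ∨ ((Fin.castAdd q j : Fin (p + q)) : ℕ) = i
        then (1:ℂ) else if u (Fin.castAdd q j) = u' (Fin.castAdd q j) then 1 else 0)
      = (if (j : ℕ) = i - 1 ∨ (j : ℕ) = i then (1:ℂ)
        else if u (Fin.castAdd q j) = u' (Fin.castAdd q j) then 1 else 0) := by
    intro j; simp [Fin.coe_castAdd]
  have hright : ∀ j : Fin q,
      (if ((Fin.natAdd p j : Fin (p + q)) : ℕ) = i - 1 ∨ ((Fin.natAdd p j : Fin (p + q)) : ℕ) = i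
        then (1:ℂ) else if u (Fin.natAdd p j) = u' (Fin.natAdd p j) then 1 else 0)
      = (if u (Fin.natAdd p j) = u' (Fin.natAdd p j) then (1:ℂ) else 0) := by
    intro j
    rw [if_neg]
    simp only [Fin.coe_natAdd]
    omega
  rw [Finset.prod_congr rfl (fun j _ => hleft j), Finset.prod_congr rfl (fun j _ => hright j)]
  rw [deltaProd, Matrix.one_apply]
  ring

/-- A `Ti` with letter inside the right block of a `kron` splitting. -/
theorem Ti_kron_right (p q i : ℕ) (h1 : 1 ≤ i) (h2 : i < q) :
    Ti d (p + q) T (p + i) = kron p q 1 (Ti d q T i) := by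
  funext u u'
  have eA : Ti d (p + q) T (p + i) = _ := dif_pos (⟨by omega, by omega⟩ : 1 ≤ p + i ∧ p + i < p + q)
  have eB : Ti d q T i = _ := dif_pos (⟨h1, h2⟩ : 1 ≤ i ∧ i < q)
  rw [eA, eB]
  simp only [kron]
  rw [Fin.prod_univ_add]
  have e1 : ∀ (w : Fin (p + q) → Fin d) (h : p + i - 1 < p + q) (h' : i - 1 < q),
      w ⟨p + i - 1, h⟩ = w (Fin.natAdd p ⟨i - 1, h'⟩) := by
    intro w h h'; congr 1; simp [Fin.ext_iff]; omega
  have e2 : ∀ (w : Fin (p + q) → Fin d) (h : p + i < p + q) (h' : i < q),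
      w ⟨p + i, h⟩ = w (Fin.natAdd p ⟨i, h'⟩) := by
    intro w h h'; congr 1
  rw [e1 u _ (by omega), e2 u _ h2, e1 u' _ (by omega), e2 u' _ h2]
  have hleft : ∀ j : Fin p,
      (if ((Fin.castAdd q j : Fin (p + q)) : ℕ) = p + i - 1 ∨ ((Fin.castAdd q j : Fin (p + q)) : ℕ) = p + i
        then (1:ℂ) else if u (Fin.castAdd q j) = u' (Fin.castAdd q j) then 1 else 0)
      = (if u (Fin.castAdd q j) = u' (Fin.castAdd q j) then (1:ℂ) else 0) := by
    intro j
    rw [if_neg]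
    simp only [Fin.coe_castAdd]
    have := j.isLt
    omega
  have hright : ∀ j : Fin q,
      (if ((Fin.natAdd p j : Fin (p + q)) : ℕ) = p + i - 1 ∨ ((Fin.natAdd p j : Fin (p + q)) : ℕ) = p + i
        then (1:ℂ) else if u (Fin.natAdd p j) = u' (Fin.natAdd p j) then 1 else 0)
      = (if (j : ℕ) = i - 1 ∨ (j : ℕ) = i then (1:ℂ)
        else if u (Fin.natAdd p j) = u' (Fin.natAdd p j) then 1 else 0) := by
    intro j
    simp only [Fin.coe_natAdd]
    by_cases hc : (j : ℕ) = i - 1 ∨ (j : ℕ) = i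
    · rw [if_pos (by omega), if_pos hc]
    · rw [if_neg (by omega), if_neg hc]
  rw [Finset.prod_congr rfl (fun j _ => hleft j), Finset.prod_congr rfl (fun j _ => hright j)]
  rw [deltaProd, Matrix.one_apply]
  ring

end TiEmbed

/-! ### Level casting -/

section CastLevel

variable {d : ℕ}

/-- Transport an operator along an equality of tensor powers. -/
noncomputable def castLevel {a b : ℕ} (h : a = b)
    (A : Matrix (Fin a → Fin d) (Fin a → Fin d) ℂ) :
    Matrix (Fin b → Fin d) (Fin b → Fin d) ℂ :=
  A.submatrix (fun w => w ∘ finCongr h) (fun w => w ∘ finCongr h)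

@[simp] theorem castLevel_rfl {a : ℕ} (A : Matrix (Fin a → Fin d) (Fin a → Fin d) ℂ) :
    castLevel rfl A = A := by
  have : (fun w : Fin a → Fin d => w ∘ finCongr rfl) = id := by
    funext w; simp [finCongr_refl]
  rw [castLevel, this, Matrix.submatrix_id_id]

theorem castLevel_mul {a b : ℕ} (h : a = b) (A B : Matrix (Fin a → Fin d) (Fin a → Fin d) ℂ) :
    castLevel h (A * B) = castLevel h A * castLevel h B := by
  subst h; simp

theorem castLevel_add {a b : ℕ} (h : a = b) (A B : Matrix (Fin a → Fin d) (Fin a → Fin d) ℂ) :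
    castLevel h (A + B) = castLevel h A + castLevel h B := by
  subst h; simp

theorem castLevel_zero {a b : ℕ} (h : a = b) :
    castLevel h (0 : Matrix (Fin a → Fin d) (Fin a → Fin d) ℂ) = 0 := by
  subst h; simp

theorem castLevel_one {a b : ℕ} (h : a = b) :
    castLevel h (1 : Matrix (Fin a → Fin d) (Fin a → Fin d) ℂ) = 1 := by
  subst h; simp

theorem castLevel_Ti {a b : ℕ} (h : a = b) (T : Matrix (Fin d × Fin d) (Fin d × Fin d) ℂ)
    (i : ℕ) : castLevel h (Ti d a T i) = Ti d b T i := by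
  subst h; simp

end CastLevel

/-! ### oneTensor and tensorOne via kron -/

section OneTensor

variable {d : ℕ} (T : Matrix (Fin d × Fin d) (Fin d × Fin d) ℂ)

theorem tensorOne_eq_kron (n : ℕ) (A : Matrix (Fin n → Fin d) (Fin n → Fin d) ℂ) :
    tensorOne d n A = kron n 1 A 1 := by
  funext u u'
  simp only [tensorOne, kron, Matrix.one_apply]
  have h1 : (fun j : Fin n => u j.castSucc) = (fun i => u (Fin.castAdd 1 i)) := by
    funext j; congr 1
  have h2 : (fun j : Fin n => u' j.castSucc) = (fun i => u' (Fin.castAdd 1 i)) := by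
    funext j; congr 1
  rw [h1, h2]
  refine congrArg _ (if_congr ?_ rfl rfl)
  constructor
  · intro h
    funext i
    have hi : Fin.natAdd n i = Fin.last n := by
      simp only [Fin.ext_iff, Fin.coe_natAdd, Fin.val_last]
      omega
    rw [hi, h]
  · intro h
    have := congrFun h 0
    have h0 : Fin.natAdd n (0 : Fin 1) = Fin.last n := by
      simp only [Fin.ext_iff, Fin.coe_natAdd, Fin.val_last, Fin.val_zero, add_zero]
    rwa [h0] at this

theorem oneTensor_eq_kron (n : ℕ) (A : Matrix (Fin n → Fin d) (Fin n → Fin d) ℂ) :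
    oneTensor d n A = castLevel (Nat.add_comm 1 n) (kron 1 n 1 A) := by
  funext u u'
  simp only [oneTensor, castLevel, kron, Matrix.submatrix_apply, Matrix.one_apply,
    Function.comp]
  have h1 : (fun j : Fin n => u j.succ)
      = (fun j => u (finCongr (Nat.add_comm 1 n) (Fin.natAdd 1 j))) := by
    funext j; congr 1
    simp only [Fin.ext_iff, finCongr_apply, Fin.coe_cast, Fin.coe_natAdd, Fin.val_succ]
    omega
  have h2 : (fun j : Fin n => u' j.succ)
      = (fun j => u' (finCongr (Nat.add_comm 1 n) (Fin.natAdd 1 j))) := by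
    funext j; congr 1
    simp only [Fin.ext_iff, finCongr_apply, Fin.coe_cast, Fin.coe_natAdd, Fin.val_succ]
    omega
  rw [h1, h2]
  refine congrArg₂ _ (if_congr ?_ rfl rfl) rfl
  constructor
  · intro h
    funext i
    have h0 : (finCongr (Nat.add_comm 1 n) (Fin.castAdd n i)) = (0 : Fin (n+1)) := by
      simp only [Fin.ext_iff, finCongr_apply, Fin.coe_cast, Fin.coe_castAdd, Fin.val_zero]
      omega
    rw [h0, h]
  · intro h
    have := congrFun h 0
    have h0 : (finCongr (Nat.add_comm 1 n) (Fin.castAdd n (0 : Fin 1))) = (0 : Fin (n+1)) := by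
      simp only [Fin.ext_iff, finCongr_apply, Fin.coe_cast, Fin.coe_castAdd, Fin.val_zero]
    rwa [h0] at this

theorem tensorOne_mul (n : ℕ) (A B : Matrix (Fin n → Fin d) (Fin n → Fin d) ℂ) :
    tensorOne d n (A * B) = tensorOne d n A * tensorOne d n B := by
  rw [tensorOne_eq_kron, tensorOne_eq_kron, tensorOne_eq_kron, kron_mul, mul_one]

theorem oneTensor_mul (n : ℕ) (A B : Matrix (Fin n → Fin d) (Fin n → Fin d) ℂ) :
    oneTensor d n (A * B) = oneTensor d n A * oneTensor d n B := by
  rw [oneTensor_eq_kron, oneTensor_eq_kron, oneTensor_eq_kron, ← castLevel_mul, kron_mul, mul_one]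

theorem tensorOne_one (n : ℕ) :
    tensorOne d n (1 : Matrix (Fin n → Fin d) (Fin n → Fin d) ℂ) = 1 := by
  rw [tensorOne_eq_kron, kron_one_one]

theorem oneTensor_one (n : ℕ) :
    oneTensor d n (1 : Matrix (Fin n → Fin d) (Fin n → Fin d) ℂ) = 1 := by
  rw [oneTensor_eq_kron, kron_one_one, castLevel_one]

theorem tensorOne_add (n : ℕ) (A B : Matrix (Fin n → Fin d) (Fin n → Fin d) ℂ) :
    tensorOne d n (A + B) = tensorOne d n A + tensorOne d n B := by
  rw [tensorOne_eq_kron, tensorOne_eq_kron, tensorOne_eq_kron, kron_add_left]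

theorem oneTensor_add (n : ℕ) (A B : Matrix (Fin n → Fin d) (Fin n → Fin d) ℂ) :
    oneTensor d n (A + B) = oneTensor d n A + oneTensor d n B := by
  rw [oneTensor_eq_kron, oneTensor_eq_kron, oneTensor_eq_kron, ← castLevel_add, kron_add_right]

theorem tensorOne_zero (n : ℕ) :
    tensorOne d n (0 : Matrix (Fin n → Fin d) (Fin n → Fin d) ℂ) = 0 := by
  rw [tensorOne_eq_kron, kron_zero_left]

theorem oneTensor_zero (n : ℕ) :
    oneTensor d n (0 : Matrix (Fin n → Fin d) (Fin n → Fin d) ℂ) = 0 := by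
  rw [oneTensor_eq_kron, kron_zero_right, castLevel_zero]

/-- Embedding a letter via `tensorOne` (identity on the last factor). -/
theorem tensorOne_Ti (n i : ℕ) (h : i < n) :
    tensorOne d n (Ti d n T i) = Ti d (n + 1) T i := by
  by_cases h1 : 1 ≤ i
  · rw [tensorOne_eq_kron, ← Ti_kron_left T n 1 i h1 h]
  · rw [Ti_of_not _ _ _ (by omega), Ti_of_not _ _ _ (by omega), tensorOne_one]

/-- Embedding a letter via `oneTensor` (identity on the first factor): shifts the index. -/
theorem oneTensor_Ti (n i : ℕ) (h1 : 1 ≤ i) :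
    oneTensor d n (Ti d n T i) = Ti d (n + 1) T (i + 1) := by
  by_cases h2 : i < n
  · rw [oneTensor_eq_kron, ← Ti_kron_right T 1 n i h1 h2]
    have : 1 + i = i + 1 := by omega
    rw [this, castLevel_Ti]
  · rw [Ti_of_not _ _ _ (by omega), Ti_of_not _ _ _ (by omega), oneTensor_one]

end OneTensor

/-! ### Braid and commutation relations at every level -/

section Relations

variable {d : ℕ} (T : Matrix (Fin d × Fin d) (Fin d × Fin d) ℂ)

/-- Distant letters commute. -/
theorem Ti_comm (m i j : ℕ) (hij : i + 2 ≤ j) :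
    Ti d m T i * Ti d m T j = Ti d m T j * Ti d m T i := by
  by_cases hi : 1 ≤ i
  · by_cases hj : j < m
    · -- both possibly in range; split the space at p = j - 1
      obtain ⟨p, q, rfl, hp⟩ : ∃ p q, m = p + q ∧ p = j - 1 :=
        ⟨j - 1, m - (j - 1), by omega, rfl⟩
      have hiq : i < p := by omega
      have hj' : j = p + 1 := by omega
      subst hj'
      rw [Ti_kron_left T p q i hi hiq, Ti_kron_right T p q 1 le_rfl (by omega),
        kron_mul, kron_mul, one_mul, mul_one, one_mul, mul_one]
    · rw [Ti_of_not T m j (by omega), mul_one, one_mul]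
  · rw [Ti_of_not T m i (by omega), mul_one, one_mul]

/-- The braid relation at every level, lifted from `H^{⊗3}`. -/
theorem Ti_braid (hb : Braided d T) (m : ℕ) : ∀ i, 1 ≤ i → i + 1 < m →
    Ti d m T i * Ti d m T (i + 1) * Ti d m T i
      = Ti d m T (i + 1) * Ti d m T i * Ti d m T (i + 1) := by
  induction m with
  | zero => omega
  | succ m ih =>
    intro i h1 h2
    rcases Nat.lt_or_ge (i + 1) m with hlt | hge
    · -- lift from level m via tensorOne
      rw [← tensorOne_Ti T m i (by omega), ← tensorOne_Ti T m (i + 1) hlt,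
        ← tensorOne_mul, ← tensorOne_mul, ← tensorOne_mul, ← tensorOne_mul,
        ih i h1 (by omega)]
    · -- i + 1 = m
      rcases Nat.lt_or_ge 1 i with hi2 | hi1
      · -- i ≥ 2: lift from level m via oneTensor
        obtain ⟨k, rfl⟩ : ∃ k, i = k + 1 := ⟨i - 1, by omega⟩
        have key := ih k (by omega) (by omega)
        rw [← oneTensor_Ti T m (k + 1) (by omega), ← oneTensor_Ti T m k (by omega),
          ← oneTensor_mul, ← oneTensor_mul, ← oneTensor_mul, ← oneTensor_mul, key]
      · -- i = 1, m = 2, so level is 3: the braid hypothesis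
        have hi : i = 1 := by omega
        have hm : m = 2 := by omega
        subst hi; subst hm
        exact hb

end Relations

/-! ### Ascending and descending products -/

section AscDesc

variable {d : ℕ} (T : Matrix (Fin d × Fin d) (Fin d × Fin d) ℂ) (m : ℕ)

/-- `t_a t_{a+1} ⋯ t_{a+k-1}` -/
noncomputable def ascM (a k : ℕ) : Matrix (Fin m → Fin d) (Fin m → Fin d) ℂ :=
  ((List.range k).map (fun j => Ti d m T (a + j))).prod

/-- `t_b t_{b-1} ⋯ t_{b-k+1}` -/
noncomputable def descM (b k : ℕ) : Matrix (Fin m → Fin d) (Fin m → Fin d) ℂ :=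
  ((List.range k).map (fun j => Ti d m T (b - j))).prod

@[simp] theorem ascM_zero (a : ℕ) : ascM T m a 0 = 1 := rfl

@[simp] theorem descM_zero (b : ℕ) : descM T m b 0 = 1 := rfl

theorem ascM_succ (a k : ℕ) : ascM T m a (k + 1) = ascM T m a k * Ti d m T (a + k) := by
  rw [ascM, ascM, List.range_succ, List.map_append, List.prod_append, List.map_singleton,
    List.prod_singleton]

theorem ascM_succ' (a k : ℕ) : ascM T m a (k + 1) = Ti d m T a * ascM T m (a + 1) k := by
  rw [ascM, ascM, List.range_succ_eq_map, List.map_cons, List.prod_cons, List.map_map, add_zero]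
  refine congrArg _ (congrArg List.prod (List.map_congr_left (fun j _ => ?_)))
  simp only [Function.comp_apply]
  exact congrArg (Ti d m T) (by omega)

theorem ascM_one (a : ℕ) : ascM T m a 1 = Ti d m T a := by
  rw [ascM_succ, ascM_zero, one_mul, add_zero]

theorem ascM_split (a p q : ℕ) : ascM T m a (p + q) = ascM T m a p * ascM T m (a + p) q := by
  rw [ascM, ascM, ascM, List.range_add, List.map_append, List.prod_append, List.map_map]
  refine congrArg _ (congrArg List.prod (List.map_congr_left (fun j _ => ?_)))
  simp only [Function.comp_apply]
  exact congrArg (Ti d m T) (by omega)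

theorem descM_succ (b k : ℕ) : descM T m b (k + 1) = descM T m b k * Ti d m T (b - k) := by
  rw [descM, descM, List.range_succ, List.map_append, List.prod_append, List.map_singleton,
    List.prod_singleton]

theorem descM_succ' (b k : ℕ) : descM T m b (k + 1) = Ti d m T b * descM T m (b - 1) k := by
  rw [descM, descM, List.range_succ_eq_map, List.map_cons, List.prod_cons, List.map_map,
    Nat.sub_zero]
  refine congrArg _ (congrArg List.prod (List.map_congr_left (fun j _ => ?_)))
  simp only [Function.comp_apply]
  exact congrArg (Ti d m T) (by omega)

/-- A letter strictly below an ascending block commutes with it. -/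
theorem comm_asc_low (j a k : ℕ) (h : j + 2 ≤ a) :
    Ti d m T j * ascM T m a k = ascM T m a k * Ti d m T j := by
  induction k with
  | zero => simp
  | succ k ih =>
    rw [ascM_succ, ← mul_assoc, ih, mul_assoc, Ti_comm T m j (a + k) (by omega), ← mul_assoc]

/-- A letter strictly above an ascending block commutes with it. -/
theorem comm_asc_high (j a k : ℕ) (h : a + k + 1 ≤ j) :
    Ti d m T j * ascM T m a k = ascM T m a k * Ti d m T j := by
  induction k with
  | zero => simp
  | succ k ih =>
    rw [ascM_succ, ← mul_assoc, ih (by omega), mul_assoc, ← Ti_comm T m (a + k) j (by omega),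
      ← mul_assoc]

/-- A letter strictly below a descending block commutes with it. -/
theorem comm_desc_low (j b k : ℕ) (h : j + k + 1 ≤ b) :
    Ti d m T j * descM T m b k = descM T m b k * Ti d m T j := by
  induction k with
  | zero => simp
  | succ k ih =>
    rw [descM_succ, ← mul_assoc, ih (by omega), mul_assoc, Ti_comm T m j (b - k) (by omega),
      ← mul_assoc]

/-- A low ascending block commutes with a high descending block. -/
theorem comm_asc_desc (p n q : ℕ) (h : p + q + 1 ≤ n) :
    ascM T m 1 p * descM T m n q = descM T m n q * ascM T m 1 p := by
  induction p with
  | zero => simp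
  | succ p ih =>
    rw [ascM_succ, mul_assoc, comm_desc_low T m (1 + p) n q (by omega), ← mul_assoc,
      ih (by omega), mul_assoc]

/-- The shift relation: `(t_a ⋯ t_{a+k-1}) t_j = t_{j+1} (t_a ⋯ t_{a+k-1})` for `a ≤ j ≤ a+k-2`. -/
theorem asc_shift (hb : Braided d T) (a k j : ℕ) (h1 : 1 ≤ a) (ha : a ≤ j)
    (hj : j + 2 ≤ a + k) (hm : a + k ≤ m) :
    ascM T m a k * Ti d m T j = Ti d m T (j + 1) * ascM T m a k := by
  obtain ⟨p, r, hk, hp⟩ : ∃ p r, k = p + (2 + r) ∧ p = j - a :=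
    ⟨j - a, a + k - j - 2, by omega, rfl⟩
  subst hk
  have hap : a + p = j := by omega
  rw [ascM_split, ascM_split T m (a + p) 2 r, hap]
  have h2 : ascM T m j 2 = Ti d m T j * Ti d m T (j + 1) := by
    rw [ascM_succ, ascM_one]
  rw [h2]
  -- normalize to right-assoc
  simp only [mul_assoc]
  -- move the rightmost t_j through the tail block
  rw [← comm_asc_low T m j (j + 2) r (by omega)]
  -- braid step
  have braid3 : ∀ X : Matrix (Fin m → Fin d) (Fin m → Fin d) ℂ,
      Ti d m T j * (Ti d m T (j + 1) * (Ti d m T j * X))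
        = Ti d m T (j + 1) * (Ti d m T j * (Ti d m T (j + 1) * X)) := by
    intro X
    rw [← mul_assoc, ← mul_assoc, Ti_braid T hb m j (by omega) (by omega), mul_assoc, mul_assoc]
  rw [braid3]
  -- move t_{j+1} left past the initial block
  have headc : ∀ X : Matrix (Fin m → Fin d) (Fin m → Fin d) ℂ,
      ascM T m a p * (Ti d m T (j + 1) * X) = Ti d m T (j + 1) * (ascM T m a p * X) := by
    intro X
    rw [← mul_assoc, ← comm_asc_high T m (j + 1) a p (by omega), mul_assoc]
  rw [headc]

end AscDesc

section Star

variable {d : ℕ} (T : Matrix (Fin d × Fin d) (Fin d × Fin d) ℂ) (m : ℕ)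

private theorem head_swap {X Y : Matrix (Fin m → Fin d) (Fin m → Fin d) ℂ}
    (h : X * Y = Y * X) (Z : Matrix (Fin m → Fin d) (Fin m → Fin d) ℂ) :
    X * (Y * Z) = Y * (X * Z) := by
  rw [← mul_assoc, h, mul_assoc]

/-- The diamond lemma:
`(t_n ⋯ t_{a+1})(t_a ⋯ t_b) = (t_a ⋯ t_{b-1})(t_n ⋯ t_a)`. -/
theorem diamond (hb : Braided d T) (n : ℕ) (hnm : n < m) :
    ∀ c a, 1 ≤ a → a + c ≤ n →
    descM T m n (n - a) * ascM T m a (c + 1) = ascM T m a c * descM T m n (n - a + 1) := by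
  intro c
  induction c with
  | zero =>
    intro a h1 h2
    have hd : descM T m n (n - a + 1) = descM T m n (n - a) * Ti d m T a := by
      rw [descM_succ]
      congr 1
      exact congrArg (Ti d m T) (by omega)
    rw [ascM_one, ascM_zero, one_mul, hd]
  | succ c ih =>
    intro a h1 h2
    have hD : descM T m n (n - a) = descM T m n (n - a - 1) * Ti d m T (a + 1) := by
      have : n - a = (n - a - 1) + 1 := by omega
      rw [this, descM_succ]
      congr 1
      exact congrArg (Ti d m T) (by omega)
    rw [hD, ascM_succ' T m a (c + 1), ascM_succ' T m (a + 1) c]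
    simp only [mul_assoc]
    -- descM' * (t_{a+1} * (t_a * (t_{a+1} * A''))) with A'' = ascM (a+2) c
    have braid3 : ∀ X : Matrix (Fin m → Fin d) (Fin m → Fin d) ℂ,
        Ti d m T (a + 1) * (Ti d m T a * (Ti d m T (a + 1) * X))
          = Ti d m T a * (Ti d m T (a + 1) * (Ti d m T a * X)) := by
      intro X
      rw [← mul_assoc, ← mul_assoc, ← Ti_braid T hb m a (by omega) (by omega),
        mul_assoc, mul_assoc]
    rw [braid3]
    -- commute the innermost t_a past ascM (a+2) c
    rw [comm_asc_low T m a (a + 1 + 1) c (by omega)]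
    -- reassemble t_{a+1} * ascM (a+2) c = ascM (a+1) (c+1)
    rw [← mul_assoc (Ti d m T (a + 1)) (ascM T m (a + 1 + 1) c), ← ascM_succ']
    -- move t_a past descM n (n-a-1)
    rw [head_swap m (comm_desc_low T m a n (n - a - 1) (by omega)).symm]
    -- apply IH at (c, a+1)
    have key := ih (a + 1) (by omega) (by omega)
    have e : n - (a + 1) = n - a - 1 := by omega
    have e2 : n - a - 1 + 1 = n - a := by omega
    rw [e, e2] at key
    rw [← mul_assoc (descM T m n (n - a - 1)), key]
    have hd : descM T m n (n - a + 1) = descM T m n (n - a) * Ti d m T a := by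
      rw [descM_succ]
      congr 1
      exact congrArg (Ti d m T) (by omega)
    rw [mul_assoc, ← hd, ← mul_assoc, ← ascM_succ']

end Star

section StarId

variable {d : ℕ} (T : Matrix (Fin d × Fin d) (Fin d × Fin d) ℂ) (m : ℕ)

/-- The single-term exchange for the star identity. -/
theorem star_term (hb : Braided d T) (n : ℕ) (hnm : n < m) (c k : ℕ)
    (hc : c < n) (hk : k < n + 1) :
    descM T m n c * ascM T m 1 k =
      if k + c < n then ascM T m 1 k * descM T m n c
      else ascM T m 1 (k - 1) * descM T m n (c + 1) := by
  split_ifs with h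
  · exact (comm_asc_desc T m k n c (by omega)).symm
  · -- k + c ≥ n; set a = n - c
    have ha1 : 1 ≤ n - c := by omega
    have hak : n - c ≤ k := by omega
    have e2 : 1 + (n - c - 1) = n - c := by omega
    -- split ascM 1 k
    have hsplit : ascM T m 1 k = ascM T m 1 (n - c - 1) * ascM T m (n - c) (k - (n - c) + 1) := by
      have e : k = (n - c - 1) + (k - (n - c) + 1) := by omega
      conv_lhs => rw [e]
      rw [ascM_split, e2]
    rw [hsplit, ← mul_assoc, ← comm_asc_desc T m (n - c - 1) n c (by omega), mul_assoc]
    -- diamond with a = n - c, noting c = n - (n - c)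
    have hdia := diamond T m hb n hnm (k - (n - c)) (n - c) ha1 (by omega)
    have e1 : n - (n - c) = c := by omega
    rw [e1] at hdia
    rw [hdia, ← mul_assoc]
    -- merge ascending blocks
    have hmerge : ascM T m 1 (n - c - 1) * ascM T m (n - c) (k - (n - c)) = ascM T m 1 (k - 1) := by
      have e : k - 1 = (n - c - 1) + (k - (n - c)) := by omega
      conv_rhs => rw [e]
      rw [ascM_split, e2]
    rw [hmerge]

/-- The star identity: `(1⊗L_n) R_{n+1} = (R_n⊗1) L_{n+1}` in product form. -/
theorem star_identity (hb : Braided d T) (n : ℕ) (hnm : n < m) :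
    (∑ k ∈ Finset.range n, descM T m n k) * (∑ k ∈ Finset.range (n + 1), ascM T m 1 k)
      = (∑ k ∈ Finset.range n, ascM T m 1 k) * (∑ k ∈ Finset.range (n + 1), descM T m n k) := by
  rw [Finset.sum_mul_sum, Finset.sum_mul_sum]
  rw [← Finset.sum_product', ← Finset.sum_product']
  refine Finset.sum_nbij' (fun x => if x.2 + x.1 < n then (x.2, x.1) else (x.2 - 1, x.1 + 1))
    (fun x => if x.1 + x.2 < n then (x.2, x.1) else (x.2 - 1, x.1 + 1)) ?_ ?_ ?_ ?_ ?_
  · rintro ⟨c, k⟩ hx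
    simp only [Finset.mem_product, Finset.mem_range] at hx ⊢
    split_ifs <;> constructor <;> omega
  · rintro ⟨k, c⟩ hx
    simp only [Finset.mem_product, Finset.mem_range] at hx ⊢
    split_ifs <;> constructor <;> omega
  · rintro ⟨c, k⟩ hx
    simp only [Finset.mem_product, Finset.mem_range] at hx
    dsimp only
    by_cases h1 : k + c < n
    · rw [if_pos h1]
      dsimp only
      rw [if_pos (by omega)]
    · rw [if_neg h1]
      dsimp only
      rw [if_neg (by omega)]
      simp only [Prod.mk.injEq]
      omega
  · rintro ⟨k, c⟩ hx
    simp only [Finset.mem_product, Finset.mem_range] at hx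
    dsimp only
    by_cases h1 : k + c < n
    · rw [if_pos h1]
      dsimp only
      rw [if_pos (by omega)]
    · rw [if_neg h1]
      dsimp only
      rw [if_neg (by omega)]
      simp only [Prod.mk.injEq]
      omega
  · rintro ⟨c, k⟩ hx
    simp only [Finset.mem_product, Finset.mem_range] at hx
    dsimp only
    rw [star_term T m hb n hnm c k hx.1 hx.2]
    by_cases h : k + c < n
    · rw [if_pos h, if_pos h]
    · rw [if_neg h, if_neg h]

end StarId

/-! ### Words and their evaluations -/

section Words

/-- The word `[1, 2, …, k]`. -/
def ascW (k : ℕ) : List ℕ := (List.range k).map (· + 1)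

/-- The word `[b, b-1, …, b-k+1]`. -/
def descW (b k : ℕ) : List ℕ := (List.range k).map (fun j => b - j)

/-- Shift all letters up by one. -/
def shiftW (w : List ℕ) : List ℕ := w.map (· + 1)

/-- Flip letters `i ↦ n - i`. -/
def flipW (n : ℕ) (w : List ℕ) : List ℕ := w.map (fun i => n - i)

/-- Words of `R_n = Σ_k t_1⋯t_k`. -/
def wordsR (n : ℕ) : List (List ℕ) := (List.range n).map ascW

/-- Words of `L_n = Σ_k t_{n-1}⋯t_{n-k}`. -/
def wordsL (n : ℕ) : List (List ℕ) := (List.range n).map (descW (n - 1))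

/-- Words of `P_n` (canonical reduced words, recursively). -/
def wordsP : ℕ → List (List ℕ)
  | 0 => [[]]
  | n + 1 => ((wordsP n).map shiftW).flatMap (fun u => (wordsR (n + 1)).map (fun r => u ++ r))

/-- Words of `Q_n` (mirrored canonical reduced words). -/
def wordsQ : ℕ → List (List ℕ)
  | 0 => [[]]
  | n + 1 => (wordsQ n).flatMap (fun u => (wordsL (n + 1)).map (fun l => u ++ l))

variable {d : ℕ} (T : Matrix (Fin d × Fin d) (Fin d × Fin d) ℂ) (m : ℕ)

/-- Evaluate a word as a product of `Ti`s. -/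
noncomputable def evalW (w : List ℕ) : Matrix (Fin m → Fin d) (Fin m → Fin d) ℂ :=
  (w.map (Ti d m T)).prod

/-- Evaluate a list of words as a sum of products. -/
noncomputable def evalS (ws : List (List ℕ)) : Matrix (Fin m → Fin d) (Fin m → Fin d) ℂ :=
  (ws.map (evalW T m)).sum

@[simp] theorem evalW_nil : evalW T m [] = 1 := rfl

theorem evalW_cons (i : ℕ) (w : List ℕ) :
    evalW T m (i :: w) = Ti d m T i * evalW T m w := by
  rw [evalW, evalW, List.map_cons, List.prod_cons]

theorem evalW_append (w w' : List ℕ) :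
    evalW T m (w ++ w') = evalW T m w * evalW T m w' := by
  rw [evalW, evalW, evalW, List.map_append, List.prod_append]

@[simp] theorem evalS_nil : evalS T m [] = 0 := rfl

theorem evalS_cons (w : List ℕ) (ws : List (List ℕ)) :
    evalS T m (w :: ws) = evalW T m w + evalS T m ws := by
  rw [evalS, evalS, List.map_cons, List.sum_cons]

theorem evalS_append (ws ws' : List (List ℕ)) :
    evalS T m (ws ++ ws') = evalS T m ws + evalS T m ws' := by
  rw [evalS, evalS, evalS, List.map_append, List.sum_append]

theorem evalS_map_append_left (u : List ℕ) (ws : List (List ℕ)) :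
    evalS T m (ws.map (fun w => u ++ w)) = evalW T m u * evalS T m ws := by
  induction ws with
  | nil => simp
  | cons w ws ih =>
    rw [List.map_cons, evalS_cons, evalS_cons, mul_add, evalW_append, ih]

/-- Product structure of the evaluation of concatenated word families. -/
theorem evalS_flatMap (ws ws' : List (List ℕ)) :
    evalS T m (ws.flatMap (fun u => ws'.map (fun w => u ++ w)))
      = evalS T m ws * evalS T m ws' := by
  induction ws with
  | nil => simp
  | cons u ws ih =>
    rw [List.flatMap_cons, evalS_append, evalS_cons, add_mul, ih, evalS_map_append_left]

theorem listSum_range (n : ℕ) (f : ℕ → Matrix (Fin m → Fin d) (Fin m → Fin d) ℂ) :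
    ((List.range n).map f).sum = ∑ k ∈ Finset.range n, f k := by
  induction n with
  | zero => simp
  | succ n ih => rw [List.range_succ, List.map_append, List.sum_append,
      Finset.sum_range_succ, ih, List.map_singleton, List.sum_singleton]

theorem evalW_ascW (k : ℕ) : evalW T m (ascW k) = ascM T m 1 k := by
  rw [evalW, ascW, ascM, List.map_map]
  exact congrArg _ (List.map_congr_left (fun j _ => congrArg (Ti d m T) (Nat.add_comm j 1)))

theorem evalW_descW (b k : ℕ) : evalW T m (descW b k) = descM T m b k := by
  rw [evalW, descW, descM, List.map_map]
  rfl

theorem prodT_eq (k : ℕ) : prodT d m T k = evalW T m (ascW k) := by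
  rw [evalW, ascW, prodT, List.map_map]
  rfl

theorem Rmat_eq (n : ℕ) : Rmat d n T = evalS T n (wordsR n) := by
  rw [Rmat, evalS, wordsR, List.map_map, listSum_range]
  exact Finset.sum_congr rfl (fun k _ => by rw [Function.comp_apply, ← prodT_eq])

theorem evalS_wordsL (n : ℕ) :
    evalS T m (wordsL n) = ∑ k ∈ Finset.range n, descM T m (n - 1) k := by
  rw [evalS, wordsL, List.map_map, listSum_range]
  exact Finset.sum_congr rfl (fun k _ => by rw [Function.comp_apply, evalW_descW])

theorem evalS_wordsR (n : ℕ) :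
    evalS T m (wordsR n) = ∑ k ∈ Finset.range n, ascM T m 1 k := by
  rw [evalS, wordsR, List.map_map, listSum_range]
  exact Finset.sum_congr rfl (fun k _ => by rw [Function.comp_apply, evalW_ascW])

/-! Letter bounds -/

theorem wordsR_letters (n : ℕ) : ∀ w ∈ wordsR n, ∀ i ∈ w, 1 ≤ i ∧ i < n := by
  intro w hw i hi
  rw [wordsR, List.mem_map] at hw
  obtain ⟨k, hk, rfl⟩ := hw
  rw [List.mem_range] at hk
  rw [ascW, List.mem_map] at hi
  obtain ⟨j, hj, rfl⟩ := hi
  rw [List.mem_range] at hj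
  omega

theorem wordsL_letters (n : ℕ) : ∀ w ∈ wordsL n, ∀ i ∈ w, 1 ≤ i ∧ i < n := by
  intro w hw i hi
  rw [wordsL, List.mem_map] at hw
  obtain ⟨k, hk, rfl⟩ := hw
  rw [List.mem_range] at hk
  rw [descW, List.mem_map] at hi
  obtain ⟨j, hj, rfl⟩ := hi
  rw [List.mem_range] at hj
  omega

theorem wordsP_letters (n : ℕ) : ∀ w ∈ wordsP n, ∀ i ∈ w, 1 ≤ i ∧ i < n := by
  induction n with
  | zero =>
    intro w hw i hi
    rw [wordsP] at hw
    simp only [List.mem_singleton] at hw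
    subst hw
    simp at hi
  | succ n ih =>
    intro w hw i hi
    rw [wordsP, List.mem_flatMap] at hw
    obtain ⟨u, hu, hw⟩ := hw
    rw [List.mem_map] at hw
    obtain ⟨r, hr, rfl⟩ := hw
    rw [List.mem_map] at hu
    obtain ⟨u', hu', rfl⟩ := hu
    rcases List.mem_append.mp hi with h | h
    · rw [shiftW, List.mem_map] at h
      obtain ⟨j, hj, rfl⟩ := h
      have := ih u' hu' j hj
      omega
    · have := wordsR_letters (n + 1) r hr i h
      omega

theorem wordsQ_letters (n : ℕ) : ∀ w ∈ wordsQ n, ∀ i ∈ w, 1 ≤ i ∧ i < n := by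
  induction n with
  | zero =>
    intro w hw i hi
    rw [wordsQ] at hw
    simp only [List.mem_singleton] at hw
    subst hw
    simp at hi
  | succ n ih =>
    intro w hw i hi
    rw [wordsQ, List.mem_flatMap] at hw
    obtain ⟨u, hu, hw⟩ := hw
    rw [List.mem_map] at hw
    obtain ⟨l, hl, rfl⟩ := hw
    rcases List.mem_append.mp hi with h | h
    · have := ih u hu i h
      omega
    · have := wordsL_letters (n + 1) l hl i h
      omega

/-! Lifting evaluations across levels -/

theorem oneTensor_evalW (n : ℕ) (w : List ℕ) (hw : ∀ i ∈ w, 1 ≤ i) :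
    oneTensor d n (evalW T n w) = evalW T (n + 1) (shiftW w) := by
  induction w with
  | nil => simp [shiftW, oneTensor_one]
  | cons i w ih =>
    rw [evalW_cons, oneTensor_mul, shiftW, List.map_cons, evalW_cons,
      ← shiftW, ih (fun j hj => hw j (List.mem_cons_of_mem _ hj)),
      oneTensor_Ti T n i (hw i (List.mem_cons_self))]

theorem tensorOne_evalW (n : ℕ) (w : List ℕ) (hw : ∀ i ∈ w, i < n) :
    tensorOne d n (evalW T n w) = evalW T (n + 1) w := by
  induction w with
  | nil => simp [tensorOne_one]
  | cons i w ih =>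
    rw [evalW_cons, tensorOne_mul, evalW_cons,
      ih (fun j hj => hw j (List.mem_cons_of_mem _ hj)),
      tensorOne_Ti T n i (hw i (List.mem_cons_self))]

theorem oneTensor_evalS (n : ℕ) (ws : List (List ℕ)) (hw : ∀ w ∈ ws, ∀ i ∈ w, 1 ≤ i) :
    oneTensor d n (evalS T n ws) = evalS T (n + 1) (ws.map shiftW) := by
  induction ws with
  | nil => simp [oneTensor_zero]
  | cons w ws ih =>
    rw [evalS_cons, oneTensor_add, List.map_cons, evalS_cons,
      ih (fun w' hw' => hw w' (List.mem_cons_of_mem _ hw')),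
      oneTensor_evalW T n w (hw w (List.mem_cons_self))]

theorem tensorOne_evalS (n : ℕ) (ws : List (List ℕ)) (hw : ∀ w ∈ ws, ∀ i ∈ w, i < n) :
    tensorOne d n (evalS T n ws) = evalS T (n + 1) ws := by
  induction ws with
  | nil => simp [tensorOne_zero]
  | cons w ws ih =>
    rw [evalS_cons, tensorOne_add, evalS_cons,
      ih (fun w' hw' => hw w' (List.mem_cons_of_mem _ hw')),
      tensorOne_evalW T n w (hw w (List.mem_cons_self))]

/-- `P_n` is the evaluation of its canonical words. -/
theorem Pmat_eq (n : ℕ) : Pmat d T n = evalS T n (wordsP n) := by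
  induction n with
  | zero =>
    show (1 : Matrix (Fin 0 → Fin d) (Fin 0 → Fin d) ℂ) = evalS T 0 [[]]
    rw [evalS_cons, evalS_nil, add_zero, evalW_nil]
  | succ n ih =>
    show oneTensor d n (Pmat d T n) * Rmat d (n + 1) T = _
    rw [ih, oneTensor_evalS T n _ (fun w hw i hi => (wordsP_letters n w hw i hi).1),
      Rmat_eq, wordsP, evalS_flatMap]

end Words

/-! ### Flipped words: `flip(wordsP n) = wordsQ n` -/

section FlipWords

theorem flipW_shiftW (n : ℕ) (w : List ℕ) : flipW (n + 1) (shiftW w) = flipW n w := by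
  rw [flipW, shiftW, List.map_map]
  exact List.map_congr_left (fun i _ => by simp only [Function.comp_apply]; omega)

theorem flipW_append (n : ℕ) (w w' : List ℕ) :
    flipW n (w ++ w') = flipW n w ++ flipW n w' := List.map_append

theorem flipW_ascW (n k : ℕ) : flipW (n + 1) (ascW k) = descW n k := by
  rw [flipW, ascW, descW, List.map_map]
  exact List.map_congr_left (fun j _ => by simp only [Function.comp_apply]; omega)

theorem map_flipW_wordsR (n : ℕ) : (wordsR (n + 1)).map (flipW (n + 1)) = wordsL (n + 1) := by
  rw [wordsR, wordsL, List.map_map]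
  refine List.map_congr_left (fun k _ => ?_)
  rw [Function.comp_apply, flipW_ascW]
  norm_num

theorem map_flipW_wordsP (n : ℕ) : (wordsP n).map (flipW n) = wordsQ n := by
  induction n with
  | zero => rfl
  | succ n ih =>
    rw [wordsP, wordsQ, ← ih, List.map_flatMap]
    rw [List.flatMap_map, List.flatMap_map]
    congr 1
    funext u
    rw [← map_flipW_wordsR n, List.map_map, List.map_map]
    refine List.map_congr_left (fun r _ => ?_)
    simp only [Function.comp_apply]
    rw [flipW_append, flipW_shiftW]

end FlipWords

/-! ### The key identity `P_n = Q_n` -/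

section PQ

variable {d : ℕ} (T : Matrix (Fin d × Fin d) (Fin d × Fin d) ℂ)

/-- `evalS` of `wordsQ (n+1)` factorizes. -/
theorem evalS_wordsQ_succ (m n : ℕ) :
    evalS T m (wordsQ (n + 1)) = evalS T m (wordsQ n) * evalS T m (wordsL (n + 1)) := by
  rw [wordsQ, evalS_flatMap]

/-- `evalS` of `wordsP (n+1)` factorizes. -/
theorem evalS_wordsP_succ (m n : ℕ) :
    evalS T m (wordsP (n + 1))
      = evalS T m ((wordsP n).map shiftW) * evalS T m (wordsR (n + 1)) := by
  rw [wordsP, evalS_flatMap]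

theorem shiftW_descW (n k : ℕ) (hk : k ≤ n) : shiftW (descW (n - 1) k) = descW n k := by
  rw [shiftW, descW, descW, List.map_map]
  refine List.map_congr_left (fun j hj => ?_)
  rw [List.mem_range] at hj
  simp only [Function.comp_apply]
  omega

theorem shiftW_append (u w : List ℕ) : shiftW (u ++ w) = shiftW u ++ shiftW w :=
  List.map_append

theorem map_word_flat (F : List ℕ → List ℕ) (hF : ∀ u w, F (u ++ w) = F u ++ F w)
    (A B : List (List ℕ)) :
    (A.flatMap (fun u => B.map (fun w => u ++ w))).map F
      = (A.map F).flatMap (fun u => (B.map F).map (fun w => u ++ w)) := by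
  rw [List.map_flatMap, List.flatMap_map]
  congr 1
  funext u
  rw [List.map_map]
  rw [List.map_map]
  exact List.map_congr_left (fun w _ => hF u w)

theorem evalS_shift_wordsL (m n : ℕ) (hnm : n < m) :
    evalS T m ((wordsL (n + 1)).map shiftW) = ∑ k ∈ Finset.range (n + 1), descM T m (n + 1) k := by
  rw [wordsL, List.map_map, evalS, List.map_map, listSum_range]
  refine Finset.sum_congr rfl (fun k hk => ?_)
  rw [Finset.mem_range] at hk
  rw [Function.comp_apply, Function.comp_apply]
  have : shiftW (descW ((n + 1) - 1) k) = descW (n + 1) k := shiftW_descW (n + 1) k (by omega)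
  rw [this, evalW_descW]

/-- The main combinatorial identity: `P_n = Q_n`. -/
theorem P_eq_Q (hb : Braided d T) : ∀ n, evalS T n (wordsP n) = evalS T n (wordsQ n) := by
  intro n
  induction n using Nat.strong_induction_on with
  | _ n ih =>
    rcases n with _ | n
    · rfl
    rcases n with _ | n
    · rfl
    -- goal at level n + 2
    rw [evalS_wordsP_succ]
    -- replace shifted wordsP (n+1) by shifted wordsQ (n+1)
    have h1 : evalS T (n + 2) ((wordsP (n + 1)).map shiftW)
        = evalS T (n + 2) ((wordsQ (n + 1)).map shiftW) := by
      rw [← oneTensor_evalS T (n + 1) _ (fun w hw i hi => (wordsP_letters (n + 1) w hw i hi).1),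
        ← oneTensor_evalS T (n + 1) _ (fun w hw i hi => (wordsQ_letters (n + 1) w hw i hi).1),
        ih (n + 1) (by omega)]
    rw [h1]
    -- factor the shifted wordsQ (n+1)
    have h2 : evalS T (n + 2) ((wordsQ (n + 1)).map shiftW)
        = evalS T (n + 2) ((wordsQ n).map shiftW)
          * evalS T (n + 2) ((wordsL (n + 1)).map shiftW) := by
      conv_lhs => rw [wordsQ]
      rw [map_word_flat shiftW shiftW_append, evalS_flatMap]
    rw [h2, mul_assoc]
    -- apply the star identity
    have h3 : evalS T (n + 2) ((wordsL (n + 1)).map shiftW) * evalS T (n + 2) (wordsR (n + 2))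
        = evalS T (n + 2) (wordsR (n + 1)) * evalS T (n + 2) (wordsL (n + 2)) := by
      rw [evalS_shift_wordsL T (n + 2) n (by omega), evalS_wordsR, evalS_wordsR,
        evalS_wordsL]
      have e : (n + 2) - 1 = n + 1 := by omega
      rw [e]
      exact star_identity T (n + 2) hb (n + 1) (by omega)
    rw [h3, ← mul_assoc]
    -- merge the first two factors into wordsQ (n+1)
    have h4 : evalS T (n + 2) ((wordsQ n).map shiftW) * evalS T (n + 2) (wordsR (n + 1))
        = evalS T (n + 2) (wordsQ (n + 1)) := by
      have key : evalS T (n + 1) ((wordsQ n).map shiftW) * evalS T (n + 1) (wordsR (n + 1))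
          = evalS T (n + 1) (wordsQ (n + 1)) := by
        have k1 : evalS T (n + 1) ((wordsP n).map shiftW)
            = evalS T (n + 1) ((wordsQ n).map shiftW) := by
          rw [← oneTensor_evalS T n _ (fun w hw i hi => (wordsP_letters n w hw i hi).1),
            ← oneTensor_evalS T n _ (fun w hw i hi => (wordsQ_letters n w hw i hi).1),
            ih n (by omega)]
        rw [← k1, ← evalS_wordsP_succ, ih (n + 1) (by omega)]
      -- lift key from level n+1 to level n+2 via tensorOne
      have l1 := tensorOne_evalS T (n + 1) ((wordsQ n).map shiftW) ?_
      have l2 := tensorOne_evalS T (n + 1) (wordsR (n + 1))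
        (fun w hw i hi => (wordsR_letters (n + 1) w hw i hi).2)
      have l3 := tensorOne_evalS T (n + 1) (wordsQ (n + 1))
        (fun w hw i hi => (wordsQ_letters (n + 1) w hw i hi).2)
      · rw [← l1, ← l2, ← l3, ← tensorOne_mul, key]
      · intro w hw i hi
        rw [List.mem_map] at hw
        obtain ⟨w', hw', rfl⟩ := hw
        rw [shiftW, List.mem_map] at hi
        obtain ⟨j, hj, rfl⟩ := hi
        have := (wordsQ_letters n w' hw' j hj).2
        omega
    rw [h4, ← evalS_wordsQ_succ]

end PQ

/-! ### The operator `U` and the flip lemma -/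

section USection

variable {d : ℕ} (T : Matrix (Fin d × Fin d) (Fin d × Fin d) ℂ) (m : ℕ)

theorem Umat_zero : Umat d m T 0 = 1 := rfl

theorem Umat_succ (r : ℕ) : Umat d m T (r + 1) = ascM T m 1 (r + 1) * Umat d m T r := by
  rw [Umat, Umat, List.range_succ_eq_map, List.map_cons, List.prod_cons, List.map_map]
  congr 1
  · rw [Nat.sub_zero, prodT_eq, evalW_ascW]
  · refine congrArg _ (List.map_congr_left (fun j _ => ?_))
    simp only [Function.comp_apply]
    exact congrArg _ (by omega)

/-- High letters commute with `U_r`. -/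
theorem U_comm_high (r j : ℕ) (h : r + 2 ≤ j) :
    Ti d m T j * Umat d m T r = Umat d m T r * Ti d m T j := by
  induction r with
  | zero => rw [Umat_zero, mul_one, one_mul]
  | succ r ih =>
    rw [Umat_succ, ← mul_assoc, comm_asc_high T m j 1 (r + 1) (by omega), mul_assoc,
      ih (by omega), ← mul_assoc]

/-- `(t_1⋯t_r)(t_1⋯t_q) = (t_2⋯t_{q+1})(t_1⋯t_r)` for `q < r`. -/
theorem asc_asc (hb : Braided d T) (r : ℕ) (hrm : 1 + r ≤ m) :
    ∀ q, q + 1 ≤ r → ascM T m 1 r * ascM T m 1 q = ascM T m 2 q * ascM T m 1 r := by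
  intro q
  induction q with
  | zero => simp
  | succ q ih =>
    intro hq
    rw [ascM_succ T m 1 q, ← mul_assoc, ih (by omega), mul_assoc,
      asc_shift T m hb 1 r (1 + q) (by omega) (by omega) (by omega) (by omega),
      ← mul_assoc]
    have e : (1 : ℕ) + q + 1 = 2 + q := by omega
    rw [e, ← ascM_succ]

/-- The flip lemma: `U_r t_i = t_{r+1-i} U_r`. -/
theorem U_flip (hb : Braided d T) :
    ∀ r, r < m → ∀ i, 1 ≤ i → i ≤ r →
    Umat d m T r * Ti d m T i = Ti d m T (r + 1 - i) * Umat d m T r := by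
  intro r
  induction r using Nat.strong_induction_on with
  | _ r ih =>
    intro hrm i h1 h2
    rcases r with _ | rr
    · omega
    rw [Umat_succ]
    rcases Nat.lt_or_ge rr 1 with hrr | hrr1
    · -- rr = 0, so i = 1, U_1 = t_1
      interval_cases rr
      interval_cases i
      rw [Umat_zero, mul_one]
      rw [ascM_one]
    rcases Nat.lt_or_ge i (rr + 1) with hir | hir
    · -- i ≤ rr: use IH then the shift relation
      have e : rr + 1 - i + 1 = rr + 1 + 1 - i := by omega
      rw [mul_assoc, ih rr (by omega) (by omega) i h1 (by omega), ← mul_assoc,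
        asc_shift T m hb 1 (rr + 1) (rr + 1 - i) (by omega) (by omega) (by omega) (by omega),
        mul_assoc, e]
    · -- i = rr + 1
      have hi : i = rr + 1 := by omega
      subst hi
      obtain ⟨ss, rfl⟩ : ∃ ss, rr = ss + 1 := ⟨rr - 1, by omega⟩
      rw [Umat_succ]
      have e2 : ss + 1 + 1 + 1 - (ss + 1 + 1) = 1 := by omega
      rw [e2]
      simp only [mul_assoc]
      rw [← U_comm_high T m ss (ss + 1 + 1) (by omega)]
      rw [← mul_assoc (ascM T m 1 (ss + 1)) (Ti d m T (ss + 1 + 1))]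
      have e1 : ascM T m 1 (ss + 1) * Ti d m T (ss + 1 + 1) = ascM T m 1 (ss + 1 + 1) := by
        have e : (1 : ℕ) + (ss + 1) = ss + 1 + 1 := by omega
        rw [ascM_succ T m 1 (ss + 1), e]
      rw [e1]
      have e3 : Ti d m T 1 * ascM T m 2 (ss + 1) = ascM T m 1 (ss + 1 + 1) := by
        have e : ascM T m (1 + 1) (ss + 1) = ascM T m 2 (ss + 1) := by norm_num
        rw [ascM_succ' T m 1 (ss + 1), e]
      have key : ascM T m 1 (ss + 1 + 1) * ascM T m 1 (ss + 1 + 1)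
          = Ti d m T 1 * (ascM T m 1 (ss + 1 + 1) * ascM T m 1 (ss + 1)) := by
        rw [asc_asc T m hb (ss + 1 + 1) (by omega) (ss + 1) (by omega), ← mul_assoc, e3]
      rw [← mul_assoc, key]
      simp only [mul_assoc]

/-- Conjugating a word by `U_r` flips all its letters. -/
theorem U_evalW (hb : Braided d T) (r : ℕ) (hrm : r < m) (w : List ℕ)
    (hw : ∀ i ∈ w, 1 ≤ i ∧ i ≤ r) :
    Umat d m T r * evalW T m w
      = evalW T m (w.map (fun i => r + 1 - i)) * Umat d m T r := by
  induction w with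
  | nil => rw [evalW_nil, List.map_nil, evalW_nil, mul_one, one_mul]
  | cons i w ih =>
    rw [evalW_cons, List.map_cons, evalW_cons, ← mul_assoc,
      U_flip T m hb r hrm i (hw i (List.mem_cons_self)).1 (hw i (List.mem_cons_self)).2,
      mul_assoc, ih (fun j hj => hw j (List.mem_cons_of_mem _ hj)), ← mul_assoc]

theorem U_evalS (hb : Braided d T) (r : ℕ) (hrm : r < m) (ws : List (List ℕ))
    (hw : ∀ w ∈ ws, ∀ i ∈ w, 1 ≤ i ∧ i ≤ r) :
    Umat d m T r * evalS T m ws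
      = evalS T m (ws.map (List.map (fun i => r + 1 - i))) * Umat d m T r := by
  induction ws with
  | nil => rw [evalS_nil, List.map_nil, evalS_nil, mul_zero, zero_mul]
  | cons w ws ih =>
    rw [evalS_cons, List.map_cons, evalS_cons, mul_add, add_mul,
      ih (fun w' hw' => hw w' (List.mem_cons_of_mem _ hw')),
      U_evalW T m hb r hrm w (hw w (List.mem_cons_self))]

end USection

/-! ### Final assembly: `P_{n+1}` commutes with `U_n` -/

section Final

variable {d : ℕ} (T : Matrix (Fin d × Fin d) (Fin d × Fin d) ℂ)

theorem PU_comm (hb : Braided d T) (n : ℕ) :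
    Pmat d T (n + 1) * Umat d (n + 1) T n = Umat d (n + 1) T n * Pmat d T (n + 1) := by
  have hP : Pmat d T (n + 1) = oneTensor d n (Pmat d T n) * Rmat d (n + 1) T := rfl
  -- Step A : U * (1 ⊗ P_n) = evalS (wordsQ n) * U
  have hA : Umat d (n + 1) T n * oneTensor d n (Pmat d T n)
      = evalS T (n + 1) (wordsQ n) * Umat d (n + 1) T n := by
    rw [Pmat_eq, oneTensor_evalS T n _ (fun w hw i hi => (wordsP_letters n w hw i hi).1),
      U_evalS T (n + 1) hb n (by omega) _ ?_]
    · congr 2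
      have h0 : List.map (List.map fun i => n + 1 - i) ((wordsP n).map shiftW)
          = (wordsP n).map (flipW n) := by
        rw [List.map_map]
        exact List.map_congr_left (fun w _ => flipW_shiftW n w)
      rw [h0, map_flipW_wordsP]
    · intro w hw i hi
      rw [List.mem_map] at hw
      obtain ⟨w', hw', rfl⟩ := hw
      rw [shiftW, List.mem_map] at hi
      obtain ⟨j, hj, rfl⟩ := hi
      have := wordsP_letters n w' hw' j hj
      omega
  -- Step B : U * R_{n+1} = evalS (wordsL (n+1)) * U
  have hB : Umat d (n + 1) T n * Rmat d (n + 1) T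
      = evalS T (n + 1) (wordsL (n + 1)) * Umat d (n + 1) T n := by
    rw [Rmat_eq, U_evalS T (n + 1) hb n (by omega) _
      (fun w hw i hi => ⟨(wordsR_letters (n + 1) w hw i hi).1,
        by have := (wordsR_letters (n + 1) w hw i hi).2; omega⟩)]
    congr 2
    have : List.map (List.map fun i => n + 1 - i) (wordsR (n + 1))
        = (wordsR (n + 1)).map (flipW (n + 1)) := rfl
    rw [this, map_flipW_wordsR]
  calc Pmat d T (n + 1) * Umat d (n + 1) T n
      = evalS T (n + 1) (wordsP (n + 1)) * Umat d (n + 1) T n := by rw [← Pmat_eq]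
    _ = evalS T (n + 1) (wordsQ (n + 1)) * Umat d (n + 1) T n := by rw [P_eq_Q T hb]
    _ = evalS T (n + 1) (wordsQ n)
        * (evalS T (n + 1) (wordsL (n + 1)) * Umat d (n + 1) T n) := by
        rw [evalS_wordsQ_succ, mul_assoc]
    _ = evalS T (n + 1) (wordsQ n) * (Umat d (n + 1) T n * Rmat d (n + 1) T) := by rw [hB]
    _ = (evalS T (n + 1) (wordsQ n) * Umat d (n + 1) T n) * Rmat d (n + 1) T := by
        rw [mul_assoc]
    _ = (Umat d (n + 1) T n * oneTensor d n (Pmat d T n)) * Rmat d (n + 1) T := by rw [hA]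
    _ = Umat d (n + 1) T n * Pmat d T (n + 1) := by rw [hP, mul_assoc]

end Final

/-- Let `T` be a braided self-adjoint contraction on `H ⊗ H`, and
`U_n = (T_1⋯T_n)(T_1⋯T_{n-1})⋯T_1` on `H^{⊗(n+1)}`.  Then `ker P_{n+1}` is invariant
under `U_n`. -/
theorem ker_P_invariant_U (d n : ℕ) (T : Matrix (Fin d × Fin d) (Fin d × Fin d) ℂ)
    (hsa : T.IsHermitian) (hcontr : ‖Matrix.toEuclideanCLM (𝕜 := ℂ) T‖ ≤ 1)
    (hbraid : Braided d T)
    (v : (Fin (n + 1) → Fin d) → ℂ) (hv : (Pmat d T (n + 1)).mulVec v = 0) :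
    (Pmat d T (n + 1)).mulVec ((Umat d (n + 1) T n).mulVec v) = 0 := by
  rw [Matrix.mulVec_mulVec, PU_comm T hbraid n, ← Matrix.mulVec_mulVec, hv,
    Matrix.mulVec_zero]

end Wick
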